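/- Let γ₁, γ₂ ∈ [0,1], α₁ = √(1−γ₁), α₂ = √(1−γ₂), and let ε_PD be the two-qubit phase damping channel with Kraus operators K_{ab} = E_a^{(γ₁)} ⊗ E_b^{(γ₂)} (a,b ∈ {0,1}), where E₀^{(γ)} = diag(1, √(1−γ)) and E₁^{(γ)} = diag(0, √γ). Then the robustness-of-imaginarity decay of the maximal imaginary state satisfies F_R(M₊ ⊗ M₊) − F_R(ε_PD(M₊ ⊗ M₊)) = 1 − (α₁ + α₂ + |α₁ − α₂|)/2. -/

import Mathlib

open Matrix Kronecker BigOperators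
open scoped ComplexOrder

noncomputable section

/-- A density matrix: positive semidefinite with trace 1. -/
def IsDensityMatrix {n : Type*} [Fintype n] [DecidableEq n] (ρ : Matrix n n ℂ) : Prop :=
  ρ.PosSemidef ∧ ρ.trace = 1

/-- The l₁-norm imaginarity measure: sum of |Im ρᵢⱼ| over off-diagonal entries. -/
noncomputable def Fl1 {n : Type*} [Fintype n] [DecidableEq n] (ρ : Matrix n n ℂ) : ℝ :=
  ∑ i, ∑ j, if i = j then 0 else |(ρ i j).im|

/-- The trace norm ‖M‖₁ = Tr √(M†M). -/
noncomputable def traceNorm {n : Type*} [Fintype n] [DecidableEq n] (M : Matrix n n ℂ) : ℝ :=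
  (((Matrix.posSemidef_conjTranspose_mul_self M).1.eigenvectorUnitary.1 *
      diagonal ((fun x : ℝ => (x : ℂ)) ∘ (√·) ∘ (Matrix.posSemidef_conjTranspose_mul_self M).1.eigenvalues) *
      (star (Matrix.posSemidef_conjTranspose_mul_self M).1.eigenvectorUnitary : Matrix n n ℂ)).trace).re

/-- The robustness of imaginarity: (1/2)‖ρ − ρᵀ‖₁. -/
noncomputable def FR {n : Type*} [Fintype n] [DecidableEq n] (ρ : Matrix n n ℂ) : ℝ :=
  traceNorm (ρ - ρᵀ) / 2

/-- Von Neumann entropy (base-2), via eigenvalues of a Hermitian matrix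
(junk value 0 if not Hermitian). -/
noncomputable def vnEntropy {n : Type*} [Fintype n] [DecidableEq n] (σ : Matrix n n ℂ) : ℝ :=
  if h : σ.IsHermitian then -∑ j, (h.eigenvalues j) * Real.logb 2 (h.eigenvalues j) else 0

/-- The relative entropy of imaginarity: S(Re ρ) − S(ρ), Re ρ = (ρ + ρᵀ)/2. -/
noncomputable def Fr {n : Type*} [Fintype n] [DecidableEq n] (ρ : Matrix n n ℂ) : ℝ :=
  vnEntropy ((1/2 : ℂ) • (ρ + ρᵀ)) - vnEntropy ρ

/-- The canonical single-qubit state ρ_A. -/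
noncomputable def rhoA (A : ℝ) : Matrix (Fin 2) (Fin 2) ℂ :=
  !![(((1 + A) / 2 : ℝ) : ℂ), -(Complex.I / 2) * (Real.sqrt (1 - A ^ 2) : ℂ);
     (Complex.I / 2) * (Real.sqrt (1 - A ^ 2) : ℂ), (((1 - A) / 2 : ℝ) : ℂ)]

/-- Density matrix of the maximal imaginary state |+⟩ = (|0⟩ + i|1⟩)/√2. -/
noncomputable def Mplus : Matrix (Fin 2) (Fin 2) ℂ :=
  (1/2 : ℂ) • !![1, -Complex.I; Complex.I, 1]

/-- Single-qubit phase damping Kraus operators. -/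
noncomputable def pdKraus (γ : ℝ) : Fin 2 → Matrix (Fin 2) (Fin 2) ℂ :=
  ![!![1, 0; 0, (Real.sqrt (1 - γ) : ℂ)], !![0, 0; 0, (Real.sqrt γ : ℂ)]]

/-- The two-qubit phase damping channel. -/
noncomputable def pd2 (γ₁ γ₂ : ℝ) (ρ : Matrix (Fin 2 × Fin 2) (Fin 2 × Fin 2) ℂ) :
    Matrix (Fin 2 × Fin 2) (Fin 2 × Fin 2) ℂ :=
  ∑ a : Fin 2, ∑ b : Fin 2,
    (pdKraus γ₁ a ⊗ₖ pdKraus γ₂ b) * ρ * (pdKraus γ₁ a ⊗ₖ pdKraus γ₂ b)ᴴ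


def Ym : Matrix (Fin 2) (Fin 2) ℂ := !![0, -Complex.I; Complex.I, 0]

lemma Ym_mul_Ym : Ym * Ym = 1 := by
  ext i j
  fin_cases i <;> fin_cases j <;>
    simp [Ym, Matrix.mul_apply, Fin.sum_univ_two, Matrix.one_apply, Complex.I_mul_I]

def Wm : Matrix (Fin 2 × Fin 2) (Fin 2 × Fin 2) ℂ := Ym ⊗ₖ Ym

lemma Wm_mul_Wm : Wm * Wm = 1 := by
  rw [Wm, ← Matrix.mul_kronecker_mul, Ym_mul_Ym, Matrix.one_kronecker_one]

lemma Wm_herm : Wmᴴ = Wm := by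
  ext ⟨i1, i2⟩ ⟨j1, j2⟩
  fin_cases i1 <;> fin_cases i2 <;> fin_cases j1 <;> fin_cases j2 <;>
    simp [Wm, Ym, Matrix.conjTranspose_apply, Matrix.kroneckerMap_apply]

lemma Wm_trace : Wm.trace = 0 := by
  rw [Wm, Matrix.trace_kronecker]
  simp [Ym, Matrix.trace_fin_two]

/-- D α β = (α/2) Y⊗1 + (β/2) 1⊗Y -/
def Dm (α β : ℝ) : Matrix (Fin 2 × Fin 2) (Fin 2 × Fin 2) ℂ :=
  ((α/2 : ℝ) : ℂ) • (Ym ⊗ₖ (1 : Matrix (Fin 2) (Fin 2) ℂ))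
    + ((β/2 : ℝ) : ℂ) • ((1 : Matrix (Fin 2) (Fin 2) ℂ) ⊗ₖ Ym)

def Sm (α β : ℝ) : Matrix (Fin 2 × Fin 2) (Fin 2 × Fin 2) ℂ :=
  (((α + β)/4 : ℝ) : ℂ) • (1 + Wm) + ((|α - β|/4 : ℝ) : ℂ) • (1 - Wm)

lemma Dm_herm (α β : ℝ) : (Dm α β)ᴴ = Dm α β := by
  ext ⟨i1, i2⟩ ⟨j1, j2⟩
  fin_cases i1 <;> fin_cases i2 <;> fin_cases j1 <;> fin_cases j2 <;>
    simp [Dm, Ym, Matrix.conjTranspose_apply, Matrix.kroneckerMap_apply, Matrix.one_apply]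

lemma Dm_mul_Dm (α β : ℝ) :
    Dm α β * Dm α β = (((α^2 + β^2)/4 : ℝ) : ℂ) • 1 + ((α*β/2 : ℝ) : ℂ) • Wm := by
  have h11 : (Ym ⊗ₖ (1 : Matrix (Fin 2) (Fin 2) ℂ)) * (Ym ⊗ₖ 1) = 1 := by
    rw [← Matrix.mul_kronecker_mul, Ym_mul_Ym, Matrix.one_mul, Matrix.one_kronecker_one]
  have h22 : ((1 : Matrix (Fin 2) (Fin 2) ℂ) ⊗ₖ Ym) * (1 ⊗ₖ Ym) = 1 := by
    rw [← Matrix.mul_kronecker_mul, Ym_mul_Ym, Matrix.one_mul, Matrix.one_kronecker_one]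
  have h12 : (Ym ⊗ₖ (1 : Matrix (Fin 2) (Fin 2) ℂ)) * (1 ⊗ₖ Ym) = Wm := by
    rw [← Matrix.mul_kronecker_mul, Matrix.mul_one, Matrix.one_mul]; rfl
  have h21 : ((1 : Matrix (Fin 2) (Fin 2) ℂ) ⊗ₖ Ym) * (Ym ⊗ₖ 1) = Wm := by
    rw [← Matrix.mul_kronecker_mul, Matrix.mul_one, Matrix.one_mul]; rfl
  rw [Dm, add_mul, mul_add, mul_add, smul_mul_assoc, smul_mul_assoc, smul_mul_assoc,
    smul_mul_assoc, mul_smul_comm, mul_smul_comm, mul_smul_comm, mul_smul_comm,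
    h11, h22, h12, h21]
  rw [smul_smul, smul_smul, smul_smul, smul_smul]
  push_cast
  module

lemma Sm_mul_Sm (α β : ℝ) : Sm α β * Sm α β = Dm α β * Dm α β := by
  rw [Dm_mul_Dm, Sm]
  rw [add_mul, mul_add, mul_add, smul_mul_assoc, smul_mul_assoc, smul_mul_assoc,
    smul_mul_assoc, mul_smul_comm, mul_smul_comm, mul_smul_comm, mul_smul_comm]
  have e1 : (1 + Wm) * (1 + Wm) = (2:ℂ) • 1 + (2:ℂ) • Wm := by
    rw [mul_add, add_mul, add_mul, Wm_mul_Wm, one_mul, mul_one, one_mul]; module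
  have e2 : (1 - Wm) * (1 - Wm) = (2:ℂ) • 1 - (2:ℂ) • Wm := by
    rw [mul_sub, sub_mul, sub_mul, Wm_mul_Wm, one_mul, mul_one, one_mul]; module
  have e3 : (1 + Wm) * (1 - Wm) = 0 := by
    rw [mul_sub, add_mul, add_mul, Wm_mul_Wm, one_mul, mul_one, one_mul]; module
  have e4 : (1 - Wm) * (1 + Wm) = 0 := by
    rw [mul_add, sub_mul, sub_mul, Wm_mul_Wm, one_mul, mul_one, one_mul]; module
  rw [e1, e2, e3, e4, smul_zero, smul_zero, smul_smul, smul_smul]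
  have habs : ((|α - β|/4 : ℝ) : ℂ) * ((|α - β|/4 : ℝ) : ℂ)
      = (((α - β)/4 : ℝ) : ℂ) * (((α - β)/4 : ℝ) : ℂ) := by
    rw [← Complex.ofReal_mul, ← Complex.ofReal_mul]
    congr 1
    rw [div_mul_div_comm, div_mul_div_comm, abs_mul_abs_self]
  rw [habs]
  push_cast
  match_scalars <;> ring

lemma psd_real_smul {n : Type*} [Fintype n] [DecidableEq n] {A : Matrix n n ℂ}
    (hA : A.PosSemidef) {r : ℝ} (hr : 0 ≤ r) : ((r : ℂ) • A).PosSemidef := by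
  constructor
  · rw [Matrix.IsHermitian, Matrix.conjTranspose_smul, hA.1]
    congr 1
    simp [Complex.ext_iff]
  · intro x
    exact (hA.smul (a := (r : ℂ)) (by exact_mod_cast hr)).2 x

lemma one_add_Wm_psd : (1 + Wm).PosSemidef := by
  have h : 1 + Wm = ((1/2 : ℝ) : ℂ) • ((1 + Wm)ᴴ * (1 + Wm)) := by
    rw [Matrix.conjTranspose_add, Wm_herm, Matrix.conjTranspose_one]
    rw [mul_add, add_mul, add_mul, Wm_mul_Wm, one_mul, mul_one, one_mul]
    push_cast
    module
  rw [h]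
  exact psd_real_smul (Matrix.posSemidef_conjTranspose_mul_self _) (by norm_num)

lemma one_sub_Wm_psd : (1 - Wm).PosSemidef := by
  have h : 1 - Wm = ((1/2 : ℝ) : ℂ) • ((1 - Wm)ᴴ * (1 - Wm)) := by
    rw [Matrix.conjTranspose_sub, Wm_herm, Matrix.conjTranspose_one]
    rw [mul_sub, sub_mul, sub_mul, Wm_mul_Wm, one_mul, mul_one, one_mul]
    push_cast
    module
  rw [h]
  exact psd_real_smul (Matrix.posSemidef_conjTranspose_mul_self _) (by norm_num)

lemma Sm_psd {α β : ℝ} (hα : 0 ≤ α) (hβ : 0 ≤ β) : (Sm α β).PosSemidef := by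
  refine Matrix.PosSemidef.add ?_ ?_
  · exact psd_real_smul one_add_Wm_psd (by positivity)
  · exact psd_real_smul one_sub_Wm_psd (by positivity)

lemma Sm_trace (α β : ℝ) : (Sm α β).trace = ((α + β + |α - β| : ℝ) : ℂ) := by
  rw [Sm, Matrix.trace_add, Matrix.trace_smul, Matrix.trace_smul, Matrix.trace_add,
    Matrix.trace_sub, Wm_trace, Matrix.trace_one]
  push_cast
  simp

open scoped MatrixOrder in
lemma tn_mat_eq {n : Type*} [Fintype n] [DecidableEq n] (M : Matrix n n ℂ) :
    ((Matrix.posSemidef_conjTranspose_mul_self M).1.eigenvectorUnitary.1 *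
      diagonal ((fun x : ℝ => (x : ℂ)) ∘ (√·) ∘ (Matrix.posSemidef_conjTranspose_mul_self M).1.eigenvalues) *
      (star (Matrix.posSemidef_conjTranspose_mul_self M).1.eigenvectorUnitary : Matrix n n ℂ))
      = CFC.sqrt (Mᴴ * M) := by
  rw [CFC.sqrt_eq_real_sqrt _ (Matrix.posSemidef_conjTranspose_mul_self M).nonneg,
    cfcₙ_eq_cfc, (Matrix.posSemidef_conjTranspose_mul_self M).1.cfc_eq]
  rfl

open scoped MatrixOrder in
lemma traceNorm_Dm {α β : ℝ} (hα : 0 ≤ α) (hβ : 0 ≤ β) :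
    traceNorm (Dm α β) = α + β + |α - β| := by
  unfold traceNorm
  have hsq : (Sm α β) ^ 2 = (Dm α β)ᴴ * (Dm α β) := by
    rw [pow_two, Sm_mul_Sm, Dm_herm]
  rw [tn_mat_eq, CFC.sqrt_unique (by rw [← pow_two]; exact hsq) (Sm_psd hα hβ).nonneg]
  rw [Sm_trace]
  simp

lemma diff_Mplus : Mplus ⊗ₖ Mplus - (Mplus ⊗ₖ Mplus)ᵀ = Dm 1 1 := by
  ext ⟨i1, i2⟩ ⟨j1, j2⟩
  fin_cases i1 <;> fin_cases i2 <;> fin_cases j1 <;> fin_cases j2 <;>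
    simp [Mplus, Dm, Ym, Matrix.kroneckerMap_apply, Matrix.transpose_apply,
      Matrix.one_apply, Matrix.smul_apply] <;> ring

def Ma (a : ℝ) : Matrix (Fin 2) (Fin 2) ℂ := (1/2 : ℂ) • (1 + (a : ℂ) • Ym)

lemma kron_conjT {A B : Matrix (Fin 2) (Fin 2) ℂ} : (A ⊗ₖ B)ᴴ = Aᴴ ⊗ₖ Bᴴ := by
  ext ⟨i1, i2⟩ ⟨j1, j2⟩
  simp [Matrix.conjTranspose_apply, Matrix.kroneckerMap_apply, star_mul', mul_comm]

lemma pd1_Mplus (g : ℝ) (h0 : 0 ≤ g) (h1 : g ≤ 1) :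
    pdKraus g 0 * Mplus * (pdKraus g 0)ᴴ + pdKraus g 1 * Mplus * (pdKraus g 1)ᴴ
      = Ma (Real.sqrt (1 - g)) := by
  have e1 : ((Real.sqrt g : ℝ) : ℂ) * ((Real.sqrt g : ℝ) : ℂ) = (g : ℂ) := by
    rw [← Complex.ofReal_mul, Real.mul_self_sqrt h0]
  have e3 : ((Real.sqrt (1 - g) : ℝ) : ℂ) * ((Real.sqrt (1 - g) : ℝ) : ℂ) = ((1 - g : ℝ) : ℂ) := by
    rw [← Complex.ofReal_mul, Real.mul_self_sqrt (by linarith)]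
  ext i j
  fin_cases i <;> fin_cases j <;>
    simp [pdKraus, Mplus, Ma, Ym, Matrix.mul_apply, Fin.sum_univ_two,
      Matrix.vecMul, dotProduct,
      Matrix.conjTranspose_apply, Matrix.one_apply, Matrix.smul_apply] <;>
    ring_nf <;>
    simp [pow_two, e1, e3] <;> push_cast <;> ring

lemma pd2_eq (g1 g2 : ℝ) (h10 : 0 ≤ g1) (h11 : g1 ≤ 1) (h20 : 0 ≤ g2) (h21 : g2 ≤ 1) :
    pd2 g1 g2 (Mplus ⊗ₖ Mplus) = Ma (Real.sqrt (1 - g1)) ⊗ₖ Ma (Real.sqrt (1 - g2)) := by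
  rw [pd2, ← pd1_Mplus g1 h10 h11, ← pd1_Mplus g2 h20 h21]
  simp only [Fin.sum_univ_two, kron_conjT, ← Matrix.mul_kronecker_mul,
    Matrix.add_kronecker, Matrix.kronecker_add]
  abel

lemma diff_pd2 (g1 g2 : ℝ) (h10 : 0 ≤ g1) (h11 : g1 ≤ 1) (h20 : 0 ≤ g2) (h21 : g2 ≤ 1) :
    pd2 g1 g2 (Mplus ⊗ₖ Mplus) - (pd2 g1 g2 (Mplus ⊗ₖ Mplus))ᵀ
      = Dm (Real.sqrt (1 - g1)) (Real.sqrt (1 - g2)) := by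
  rw [pd2_eq g1 g2 h10 h11 h20 h21]
  ext ⟨i1, i2⟩ ⟨j1, j2⟩
  fin_cases i1 <;> fin_cases i2 <;> fin_cases j1 <;> fin_cases j2 <;>
    simp [Ma, Dm, Ym, Matrix.kroneckerMap_apply, Matrix.transpose_apply,
      Matrix.one_apply, Matrix.smul_apply] <;> ring

/-- robustness-of-imaginarity decay of M₊ ⊗ M₊ under two-qubit
phase damping. -/
theorem pd2_robustness_decay (γ₁ γ₂ : ℝ) (h₁0 : 0 ≤ γ₁) (h₁1 : γ₁ ≤ 1)
    (h₂0 : 0 ≤ γ₂) (h₂1 : γ₂ ≤ 1) :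
    FR (Mplus ⊗ₖ Mplus) - FR (pd2 γ₁ γ₂ (Mplus ⊗ₖ Mplus))
      = 1 - (Real.sqrt (1 - γ₁) + Real.sqrt (1 - γ₂)
              + |Real.sqrt (1 - γ₁) - Real.sqrt (1 - γ₂)|) / 2 := by
  rw [FR, FR, diff_Mplus, diff_pd2 γ₁ γ₂ h₁0 h₁1 h₂0 h₂1,
    traceNorm_Dm zero_le_one zero_le_one,
    traceNorm_Dm (Real.sqrt_nonneg _) (Real.sqrt_nonneg _)]
  norm_num
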